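/- The norm is multiplicative on ℍ[t,s]: for all P, Q ∈ ℍ[t,s], N(PQ) = N(P)·N(Q). -/
import Mathlib


open Polynomial

/-- Coefficientwise quaternion conjugation of a univariate polynomial in ℍ[t]. -/
noncomputable def conj1 (Q : Polynomial (Quaternion ℝ)) : Polynomial (Quaternion ℝ) :=
  Q.sum fun n a => C (star a) * X ^ n

/-- Coefficientwise quaternion conjugation of a bivariate polynomial in ℍ[t][s]. -/
noncomputable def conj2 (Q : Polynomial (Polynomial (Quaternion ℝ))) :
    Polynomial (Polynomial (Quaternion ℝ)) :=
  Q.sum fun n a => C (conj1 a) * X ^ n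

lemma conj1_coeff (p : Polynomial (Quaternion ℝ)) (n : ℕ) :
    (conj1 p).coeff n = star (p.coeff n) := by
  rw [conj1, Polynomial.sum, finset_sum_coeff]
  simp only [coeff_C_mul, coeff_X_pow, mul_ite, mul_one, mul_zero]
  rw [Finset.sum_ite_eq p.support n (fun k => star (p.coeff k))]
  split_ifs with h
  · rfl
  · rw [notMem_support_iff.mp h, star_zero]

lemma conj1_zero : conj1 0 = 0 := by
  refine Polynomial.ext fun n => ?_; rw [conj1_coeff]; simp

lemma conj2_coeff (p : Polynomial (Polynomial (Quaternion ℝ))) (n : ℕ) :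
    (conj2 p).coeff n = conj1 (p.coeff n) := by
  rw [conj2, Polynomial.sum, finset_sum_coeff]
  simp only [coeff_C_mul, coeff_X_pow, mul_ite, mul_one, mul_zero]
  rw [Finset.sum_ite_eq p.support n (fun k => conj1 (p.coeff k))]
  split_ifs with h
  · rfl
  · rw [notMem_support_iff.mp h, conj1_zero]

lemma conj1_add (p q : Polynomial (Quaternion ℝ)) :
    conj1 (p + q) = conj1 p + conj1 q := by
  refine Polynomial.ext fun n => ?_; simp [conj1_coeff, star_add]

lemma conj1_sum {ι : Type*} (s : Finset ι) (f : ι → Polynomial (Quaternion ℝ)) :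
    conj1 (∑ i ∈ s, f i) = ∑ i ∈ s, conj1 (f i) := by
  classical
  induction s using Finset.cons_induction with
  | empty => simp [conj1_zero]
  | cons a s ha ih => rw [Finset.sum_cons, Finset.sum_cons, conj1_add, ih]

lemma conj1_mul (p q : Polynomial (Quaternion ℝ)) :
    conj1 (p * q) = conj1 q * conj1 p := by
  refine Polynomial.ext fun n => ?_
  rw [conj1_coeff, coeff_mul, coeff_mul, star_sum]
  rw [← Finset.Nat.sum_antidiagonal_swap
    (f := fun x : ℕ × ℕ => (conj1 q).coeff x.1 * (conj1 p).coeff x.2)]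
  exact Finset.sum_congr rfl fun x _ => by
    simp [conj1_coeff, star_mul]

lemma conj1_conj1 (p : Polynomial (Quaternion ℝ)) : conj1 (conj1 p) = p := by
  refine Polynomial.ext fun n => ?_; rw [conj1_coeff, conj1_coeff, star_star]

lemma conj2_mul (p q : Polynomial (Polynomial (Quaternion ℝ))) :
    conj2 (p * q) = conj2 q * conj2 p := by
  refine Polynomial.ext fun n => ?_
  rw [conj2_coeff, coeff_mul, coeff_mul, conj1_sum]
  rw [← Finset.Nat.sum_antidiagonal_swap
    (f := fun x : ℕ × ℕ => (conj2 q).coeff x.1 * (conj2 p).coeff x.2)]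
  exact Finset.sum_congr rfl fun x _ => by
    simp [conj2_coeff, conj1_mul]

/-- A polynomial commutes with everything when its coefficients commute with
all coefficients of the other polynomial. -/
lemma commute_of_coeff_commute {R : Type*} [Ring R] {p q : Polynomial R}
    (h : ∀ i j, Commute (p.coeff i) (q.coeff j)) : p * q = q * p := by
  refine Polynomial.ext fun n => ?_
  rw [coeff_mul, coeff_mul]
  rw [← Finset.Nat.sum_antidiagonal_swap
    (f := fun x : ℕ × ℕ => q.coeff x.1 * p.coeff x.2)]
  exact Finset.sum_congr rfl fun x _ => (h x.1 x.2).eq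

/-- A univariate quaternion polynomial fixed by `conj1` is central. -/
lemma central_of_conj1_fixed {p : Polynomial (Quaternion ℝ)}
    (h : conj1 p = p) (q : Polynomial (Quaternion ℝ)) : p * q = q * p := by
  apply commute_of_coeff_commute
  intro i j
  have hs : star (p.coeff i) = p.coeff i := by
    rw [← conj1_coeff, h]
  have : p.coeff i = ((p.coeff i).re : Quaternion ℝ) := Quaternion.star_eq_self.mp hs
  rw [this]
  exact Quaternion.coe_commute _ _

/-- Every coefficient of `Q * conj2 Q` is fixed by `conj1`. -/
lemma conj1_coeff_norm (Q : Polynomial (Polynomial (Quaternion ℝ))) (n : ℕ) :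
    conj1 ((Q * conj2 Q).coeff n) = (Q * conj2 Q).coeff n := by
  rw [coeff_mul, conj1_sum]
  rw [← Finset.Nat.sum_antidiagonal_swap
    (f := fun x : ℕ × ℕ => conj1 (Q.coeff x.1 * (conj2 Q).coeff x.2))]
  exact Finset.sum_congr rfl fun x _ => by
    simp only [Prod.fst_swap, Prod.snd_swap, conj2_coeff, conj1_mul, conj1_conj1]

/-- `Q * conj2 Q` is central in ℍ[t][s]. -/
lemma norm_central (Q R : Polynomial (Polynomial (Quaternion ℝ))) :
    (Q * conj2 Q) * R = R * (Q * conj2 Q) := by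
  apply commute_of_coeff_commute
  intro i j
  exact (central_of_conj1_fixed (conj1_coeff_norm Q i) (R.coeff j))

/-- The norm N(Q) = Q·conj(Q) is multiplicative on ℍ[t,s]. -/
theorem norm_polynomial_mul (P Q : Polynomial (Polynomial (Quaternion ℝ))) :
    (P * Q) * conj2 (P * Q) = (P * conj2 P) * (Q * conj2 Q) := by
  rw [conj2_mul]
  calc P * Q * (conj2 Q * conj2 P)
      = P * ((Q * conj2 Q) * conj2 P) := by rw [mul_assoc, mul_assoc]
    _ = P * (conj2 P * (Q * conj2 Q)) := by rw [norm_central]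
    _ = (P * conj2 P) * (Q * conj2 Q) := by rw [mul_assoc]
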